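/- (Non-collapse for late steps; Theorem 2, second case.) Under the TAID regression recursion, if λ_τ ≥ 0 for every τ and ‖z_0‖ > √(Nε), then for every integer t with T·√(Nε)/‖z_0‖ < t ≤ T one has ‖z̃_t‖ > √(Nε); in particular z̃_t ≠ 0, i.e., the step-t prediction does not collapse. -/

import Mathlib

/-- (Non-collapse for late steps.) Under the TAID regression recursion,
if `λ τ ≥ 0` for every `τ` and `‖z 0‖ > √(Nε)`, then for every integer `t` with
`T·√(Nε)/‖z 0‖ < t ≤ T` one has `‖z̃ t‖ > √(Nε)`; in particular `z̃ t ≠ 0`. -/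
theorem taid_non_collapse_late_steps
    (N T : ℕ) (hN : 1 ≤ N) (hT : 1 ≤ T) (ε : ℝ) (hε : 0 < ε)
    (d : Fin N → ℝ) (hd : ∀ k, 0 < d k)
    (lam : ℕ → ℝ) (hlam : ∀ τ, 0 ≤ lam τ)
    (z0 : EuclideanSpace ℝ (Fin N))
    (z ztilde : ℕ → EuclideanSpace ℝ (Fin N))
    (hz0 : ztilde 0 = z0)
    (hz : ∀ τ : ℕ, z (τ + 1) =
      ((Matrix.diagonal d) *
        (lam τ • (1 : Matrix (Fin N) (Fin N) ℝ) + Matrix.diagonal d)⁻¹).mulVec (ztilde τ))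
    (hzt : ∀ τ : ℕ, ztilde (τ + 1) =
      (1 - ((τ + 1 : ℕ) : ℝ) / (T : ℝ)) • z (τ + 1) + (((τ + 1 : ℕ) : ℝ) / (T : ℝ)) • z0)
    (hz0big : Real.sqrt ((N : ℝ) * ε) < ‖z0‖) :
    ∀ t : ℕ, (T : ℝ) * Real.sqrt ((N : ℝ) * ε) / ‖z0‖ < (t : ℝ) → t ≤ T →
      Real.sqrt ((N : ℝ) * ε) < ‖ztilde t‖ ∧ ztilde t ≠ 0 := by
  have hTpos : (0:ℝ) < T := by exact_mod_cast hT
  have hsq : 0 < Real.sqrt ((N : ℝ) * ε) := Real.sqrt_pos.mpr (by positivity)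
  have hz0pos : (0:ℝ) < ‖z0‖ := lt_trans hsq hz0big
  -- matrix simplification
  have hmat : ∀ τ : ℕ, ∀ k : Fin N, (z (τ+1)) k = (d k / (lam τ + d k)) * (ztilde τ) k := by
    intro τ k
    have hw : ∀ k : Fin N, lam τ + d k ≠ 0 := fun k => by
      have := hlam τ; have := hd k; linarith
    have h1 : lam τ • (1 : Matrix (Fin N) (Fin N) ℝ) + Matrix.diagonal d
        = Matrix.diagonal (fun k => lam τ + d k) := by
      ext i j
      by_cases h : i = j <;> simp [Matrix.one_apply, Matrix.diagonal, h]
    have h2 : (Matrix.diagonal (fun k => lam τ + d k))⁻¹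
        = Matrix.diagonal (fun k => (lam τ + d k)⁻¹) := by
      apply Matrix.inv_eq_right_inv
      rw [Matrix.diagonal_mul_diagonal]
      have : (fun k => (lam τ + d k) * (lam τ + d k)⁻¹) = fun _ : Fin N => (1:ℝ) := by
        funext k; exact mul_inv_cancel₀ (hw k)
      rw [this, Matrix.diagonal_one]
    have := congrFun (hz τ) k
    rw [h1, h2, Matrix.diagonal_mul_diagonal] at this
    rw [this, Matrix.mulVec_diagonal, div_eq_mul_inv]
  -- key induction
  have key : ∀ τ : ℕ, τ ≤ T → ∀ k : Fin N,
      ∃ c : ℝ, (τ:ℝ)/(T:ℝ) ≤ c ∧ c ≤ 1 ∧ (ztilde τ) k = c * z0 k := by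
    intro τ
    induction τ with
    | zero =>
      intro _ k
      exact ⟨1, by simp, le_refl 1, by rw [hz0]; ring⟩
    | succ n ih =>
      intro hle k
      obtain ⟨c, hc1, hc2, hc3⟩ := ih (Nat.le_of_succ_le hle) k
      set s : ℝ := ((n+1 : ℕ) : ℝ) / (T : ℝ) with hs
      have hs1 : s ≤ 1 := by
        rw [hs, div_le_one hTpos]; exact_mod_cast hle
      have hs0 : 0 ≤ s := by positivity
      set α : ℝ := d k / (lam n + d k) with hα
      have hden : 0 < lam n + d k := by have := hlam n; have := hd k; linarith
      have hα0 : 0 < α := div_pos (hd k) hden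
      have hα1 : α ≤ 1 := by
        rw [hα, div_le_one hden]
        linarith [hlam n]
      have hcn0 : 0 ≤ c := le_trans (by positivity) hc1
      have hαc0 : 0 ≤ α * c := mul_nonneg hα0.le hcn0
      have hαc1 : α * c ≤ 1 := by nlinarith
      have h1s : 0 ≤ 1 - s := by linarith
      refine ⟨(1 - s) * (α * c) + s, ?_, ?_, ?_⟩
      · nlinarith [mul_nonneg h1s hαc0]
      · nlinarith [mul_le_mul_of_nonneg_left hαc1 h1s]
      · have hzk := congrArg (fun v => v k) (hzt n)
        have happ : (ztilde (n+1)) k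
            = (1 - s) * (z (n+1)) k + s * z0 k := by
          rw [hzk]; simp [hs]
        rw [happ, hmat n k, hc3]; ring
  intro t ht1 ht2
  have hfrac : Real.sqrt ((N : ℝ) * ε) < ((t:ℝ)/(T:ℝ)) * ‖z0‖ := by
    rw [div_lt_iff₀ hz0pos] at ht1
    rw [div_mul_eq_mul_div, lt_div_iff₀ hTpos]
    linarith
  -- norm lower bound
  have hnorm : ((t:ℝ)/(T:ℝ)) * ‖z0‖ ≤ ‖ztilde t‖ := by
    have hq : (((t:ℝ)/(T:ℝ)) * ‖z0‖)^2 ≤ ‖ztilde t‖^2 := by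
      rw [EuclideanSpace.norm_eq, EuclideanSpace.norm_eq, mul_pow,
        Real.sq_sqrt (by positivity), Real.sq_sqrt (by positivity), Finset.mul_sum]
      apply Finset.sum_le_sum
      intro k _
      obtain ⟨c, hc1, hc2, hc3⟩ := key t ht2 k
      have h0 : (0:ℝ) ≤ (t:ℝ)/(T:ℝ) := by positivity
      rw [hc3]
      have : ‖c * z0 k‖^2 = c^2 * ‖z0 k‖^2 := by
        rw [norm_mul, mul_pow]; simp
      rw [this]
      have : ((t:ℝ)/(T:ℝ))^2 ≤ c^2 := by nlinarith
      nlinarith [sq_nonneg (‖z0 k‖), norm_nonneg (z0 k)]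
    have h0 : (0:ℝ) ≤ ((t:ℝ)/(T:ℝ)) * ‖z0‖ := by positivity
    exact (pow_le_pow_iff_left₀ h0 (norm_nonneg _) two_ne_zero).mp hq
  have hbig : Real.sqrt ((N : ℝ) * ε) < ‖ztilde t‖ := lt_of_lt_of_le hfrac hnorm
  refine ⟨hbig, fun h => ?_⟩
  rw [h, norm_zero] at hbig
  linarith [Real.sqrt_nonneg ((N:ℝ) * ε)]
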